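/- Under the penalization assumptions, for all x ∈ ℝ³ and t ∈ ℝ one has (1/(4κ)) V(x) t² + (1/4) g(x,t) t − G(x,t) ≥ 0, where g(x,t) = χ_Λ(x) f(t) + (1 − χ_Λ(x)) f_*(t) and G(x,t) = ∫₀ᵗ g(x,s) ds. -/
import Mathlib

open Classical in

theorem stmt_8 (f : ℝ → ℝ) (hf : Continuous f)
    (hneg : ∀ t ≤ (0 : ℝ), f t = 0)
    (F : ℝ → ℝ) (hF : ∀ t : ℝ, F t = ∫ τ in (0 : ℝ)..t, f τ)
    (μ : ℝ) (hμ : 4 < μ)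
    (hAR : ∀ t > (0 : ℝ), 0 < μ * F t ∧ μ * F t ≤ f t * t)
    (hmono : StrictMonoOn (fun t : ℝ => f t / t ^ 3) (Set.Ioi 0))
    (V₀ κ a : ℝ) (hV₀ : 0 < V₀) (hκ : 1 < κ) (ha : 0 < a)
    (haeq : f a / a = V₀ / κ)
    (fstar : ℝ → ℝ)
    (hfstar : ∀ t : ℝ, fstar t = if t ≤ a then f t else (V₀ / κ) * t)
    (Λ : Set (EuclideanSpace ℝ (Fin 3))) (hΛo : IsOpen Λ) (hΛb : Bornology.IsBounded Λ)
    (V : EuclideanSpace ℝ (Fin 3) → ℝ) (hVcont : Continuous V) (hV : ∀ x, V₀ ≤ V x)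
    (g : EuclideanSpace ℝ (Fin 3) → ℝ → ℝ)
    (hg : ∀ x t, g x t = if x ∈ Λ then f t else fstar t)
    (G : EuclideanSpace ℝ (Fin 3) → ℝ → ℝ)
    (hG : ∀ x t, G x t = ∫ s in (0 : ℝ)..t, g x s) :
    ∀ (x : EuclideanSpace ℝ (Fin 3)) (t : ℝ),
      (1 / (4 * κ)) * V x * t ^ 2 + (1 / 4) * g x t * t - G x t ≥ 0 := by
  have hκ0 : 0 < κ := by linarith
  have hμ0 : 0 < μ := by linarith
  have hfa : f a = V₀ / κ * a := by
    field_simp at haeq ⊢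
    linarith [haeq]
  -- F vanishes on nonpositive reals
  have hF0 : ∀ s ≤ (0 : ℝ), F s = 0 := by
    intro s hs
    rw [hF]
    have : Set.EqOn f (fun _ => (0 : ℝ)) (Set.uIcc 0 s) := by
      intro u hu
      rcases Set.mem_uIcc.1 hu with ⟨h1, h2⟩ | ⟨h1, h2⟩
      · exact hneg u (le_trans h2 hs)
      · exact hneg u h2
    rw [intervalIntegral.integral_congr this]
    simp
  -- the core inequality when the nonlinearity is f itself
  have hfcase : ∀ (x : EuclideanSpace ℝ (Fin 3)) (t : ℝ),
      (1 / (4 * κ)) * V x * t ^ 2 + (1 / 4) * f t * t - F t ≥ 0 := by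
    intro x t
    have hVx : V₀ ≤ V x := hV x
    have hterm : 0 ≤ 1 / (4 * κ) * V x * t ^ 2 := by
      apply mul_nonneg (mul_nonneg (by positivity) (by linarith)) (sq_nonneg t)
    rcases le_or_gt t 0 with ht | ht
    · rw [hF0 t ht, hneg t ht]
      simpa using hterm
    · obtain ⟨h1, h2⟩ := hAR t ht
      nlinarith [h1, h2, hterm]
  intro x t
  by_cases hx : x ∈ Λ
  · have hgx : (fun s => g x s) = f := funext fun s => by rw [hg, if_pos hx]
    have hGx : G x t = F t := by
      rw [hG, show (fun s => g x s) = f from hgx]; exact (hF t).symm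
    rw [hGx, hg, if_pos hx]
    exact hfcase x t
  · have hgx : (fun s => g x s) = fstar := funext fun s => by rw [hg, if_neg hx]
    have hGx : G x t = ∫ s in (0 : ℝ)..t, fstar s := by rw [hG, hgx]
    have hfeq : ∀ u : ℝ, u ≤ a → fstar u = f u := fun u hu => by
      rw [hfstar, if_pos hu]
    -- integral of fstar up to any point ≤ a equals F
    have hFeq : ∀ s : ℝ, s ≤ a → (∫ u in (0 : ℝ)..s, fstar u) = F s := by
      intro s hs
      rw [hF]
      apply intervalIntegral.integral_congr
      intro u hu
      apply hfeq
      rcases Set.mem_uIcc.1 hu with ⟨h1, h2⟩ | ⟨h1, h2⟩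
      · linarith
      · linarith
    rw [hg, if_neg hx, hGx]
    rcases le_or_gt t a with ht | ht
    · rw [hFeq t ht, hfeq t ht]
      exact hfcase x t
    · -- t > a : fstar is linear beyond a
      have hfstc : Continuous fstar := by
        have : fstar = fun u => if u ≤ a then f u else (V₀ / κ) * u := funext hfstar
        rw [this]
        apply Continuous.if_le hf (continuous_const.mul continuous_id) continuous_id
          continuous_const
        intro u hu
        rw [show u = a from hu, hfa]; simp
      have hsplit : (∫ u in (0 : ℝ)..t, fstar u)
          = (∫ u in (0 : ℝ)..a, fstar u) + ∫ u in a..t, fstar u :=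
        (intervalIntegral.integral_add_adjacent_intervals
          (hfstc.intervalIntegrable _ _) (hfstc.intervalIntegrable _ _)).symm
      have htail : (∫ u in a..t, fstar u) = V₀ / κ * ((t ^ 2 - a ^ 2) / 2) := by
        have : (∫ u in a..t, fstar u) = ∫ u in a..t, V₀ / κ * u := by
          apply intervalIntegral.integral_congr
          intro u hu
          rw [Set.uIcc_of_le (le_of_lt ht)] at hu
          rcases eq_or_lt_of_le hu.1 with h | h
          · rw [hfstar, if_pos h.symm.le, ← h, hfa]
          · rw [hfstar, if_neg (not_le.2 h)]
        rw [this, intervalIntegral.integral_const_mul, integral_id]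
      rw [hsplit, hFeq a le_rfl, htail, hfstar, if_neg (not_le.2 ht)]
      have hVx : V₀ ≤ V x := hV x
      obtain ⟨h1, h2⟩ := hAR a ha
      rw [hfa] at h2
      have hFa : F a ≤ V₀ / κ * a ^ 2 / μ := by
        rw [le_div_iff₀ hμ0]
        nlinarith [h2]
      have hc : 0 < V₀ / κ := div_pos hV₀ hκ0
      have hVterm : V₀ / κ / 4 * t ^ 2 ≤ 1 / (4 * κ) * V x * t ^ 2 := by
        have : V₀ / κ / 4 = 1 / (4 * κ) * V₀ := by ring
        rw [this]
        apply mul_le_mul_of_nonneg_right _ (sq_nonneg t)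
        apply mul_le_mul_of_nonneg_left hVx (by positivity)
      have hμa : V₀ / κ * a ^ 2 / μ ≤ V₀ / κ * a ^ 2 / 4 := by
        rw [div_le_div_iff₀ hμ0 (by norm_num : (0:ℝ) < 4)]
        nlinarith [mul_pos (div_pos hV₀ hκ0) (pow_pos ha 2)]
      nlinarith [hVterm, hFa, hμa, mul_pos hc (pow_pos ha 2), sq_nonneg t]
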